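/- arXiv:2305.03213 — 4 statements merged into one kernel-verified Lean document; each statement's English description precedes it below -/
import Mathlib

section
/- Let N, N' be lattices, c ∈ N ⊗ C, c' ∈ N' ⊗ C. A superalgebra map φ* : C[M'][ξ'] → C[M][ξ] (M = N^*, M' = (N')^*) is a morphism of Hopf superalgebras (for the supertorus Hopf structures determined by c and c') if and only if: (i) there is a lattice map φ̄* : M' → M with φ*(x^{m'}) = x^{φ̄*(m')}; (ii) φ*(ξ') = aξ for some a ∈ C; and (iii) ⟨φ̄*(m'), c⟩ = a²⟨m', c'⟩ for all m' ∈ M', i.e. φ̄_C(c) = a²c' where φ̄ is the dual map N → N'. -/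
noncomputable section

/-- Model of `ℂ[M][ξ]`: basis indexed by `M × ZMod 2` (monomial and parity). -/
abbrev SupA (M : Type*) := (M × ZMod 2) →₀ ℂ

/-- Model of `ℂ[M][ξ] ⊗ ℂ[M][ξ]`. -/
abbrev SupL2 (M : Type*) := ((M × M) × (ZMod 2 × ZMod 2)) →₀ ℂ

/-- The supercommutative product of two basis elements of `ℂ[M][ξ]` (`ξ² = 0`). -/
def mulB {M : Type*} [AddCommGroup M] (k k' : M × ZMod 2) : SupA M :=
  if k.2 = 1 ∧ k'.2 = 1 then 0 else Finsupp.single (k.1 + k'.1, k.2 + k'.2) 1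

/-- The multiplication of `ℂ[M][ξ]` as a bilinear map. -/
def mulA {M : Type*} [AddCommGroup M] : SupA M →ₗ[ℂ] SupA M →ₗ[ℂ] SupA M :=
  Finsupp.lift (SupA M →ₗ[ℂ] SupA M) ℂ (M × ZMod 2) (fun k =>
    Finsupp.lift (SupA M) ℂ (M × ZMod 2) (fun k' => mulB k k'))

/-- The bilinear tensor map `ℂ[M][ξ] × ℂ[M][ξ] → ℂ[M][ξ] ⊗ ℂ[M][ξ]`. -/
def tens2 {M : Type*} : SupA M →ₗ[ℂ] SupA M →ₗ[ℂ] SupL2 M :=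
  Finsupp.lift (SupA M →ₗ[ℂ] SupL2 M) ℂ (M × ZMod 2) (fun k =>
    Finsupp.lift (SupL2 M) ℂ (M × ZMod 2) (fun k' =>
      Finsupp.single ((k.1, k'.1), (k.2, k'.2)) 1))

/-- `φ ⊗ φ` (no signs arise since `φ` is parity preserving, i.e. even). -/
def tensorSq {M M' : Type*} (φ : SupA M' →ₗ[ℂ] SupA M) : SupL2 M' →ₗ[ℂ] SupL2 M :=
  Finsupp.lift (SupL2 M) ℂ ((M' × M') × (ZMod 2 × ZMod 2)) (fun K =>
    tens2 (φ (Finsupp.single (K.1.1, K.2.1) 1)) (φ (Finsupp.single (K.1.2, K.2.2) 1)))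

/-- The comultiplication on basis elements. -/
def deltaB {M : Type*} [AddCommGroup M] (c : M →+ ℂ) (k : M × ZMod 2) : SupL2 M :=
  if k.2 = 0 then
    Finsupp.single ((k.1, k.1), (0, 0)) 1 + c k.1 • Finsupp.single ((k.1, k.1), (1, 1)) 1
  else
    Finsupp.single ((k.1, k.1), (1, 0)) 1 + Finsupp.single ((k.1, k.1), (0, 1)) 1

/-- The comultiplication `Δ : ℂ[M][ξ] → ℂ[M][ξ] ⊗ ℂ[M][ξ]`. -/
def Delta {M : Type*} [AddCommGroup M] (c : M →+ ℂ) : SupA M →ₗ[ℂ] SupL2 M :=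
  Finsupp.lift (SupL2 M) ℂ (M × ZMod 2) (deltaB c)

/-- The counit `ε` with `ε(x^m) = 1`, `ε(x^m ξ) = 0`. -/
def counit {M : Type*} : SupA M →ₗ[ℂ] ℂ :=
  Finsupp.lift ℂ ℂ (M × ZMod 2) (fun k => if k.2 = 0 then 1 else 0)

/-- The antipode `S` with `S(x^m) = x^{-m}`, `S(x^m ξ) = -x^{-m} ξ`. -/
def antipode {M : Type*} [AddCommGroup M] : SupA M →ₗ[ℂ] SupA M :=
  Finsupp.lift (SupA M) ℂ (M × ZMod 2) (fun k =>
    if k.2 = 0 then Finsupp.single (-k.1, 0) 1 else -Finsupp.single (-k.1, 1) 1)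

open scoped Classical

section Helpers

lemma zmod2_cases (p : ZMod 2) : p = 0 ∨ p = 1 := by revert p; decide
lemma z01 : (0:ZMod 2) ≠ 1 := by decide
lemma z10 : (1:ZMod 2) ≠ 0 := by decide

variable {M M' : Type*} [AddCommGroup M] [AddCommGroup M']

lemma mulA_single (k k' : M × ZMod 2) (b b' : ℂ) :
    mulA (Finsupp.single k b) (Finsupp.single k' b') = (b * b') • mulB k k' := by
  simp [mulA, Finsupp.lift_apply, Finsupp.sum_single_index, smul_smul, mul_comm]

lemma tens2_single (k k' : M × ZMod 2) (b b' : ℂ) :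
    tens2 (Finsupp.single k b) (Finsupp.single k' b')
      = (b * b') • Finsupp.single ((k.1, k'.1), (k.2, k'.2)) (1:ℂ) := by
  simp [tens2, Finsupp.lift_apply, Finsupp.sum_single_index, smul_smul, mul_comm]

lemma tens2_apply (u v : SupA M) (m n : M) (p q : ZMod 2) :
    tens2 u v ((m, n), (p, q)) = u (m, p) * v (n, q) := by
  induction u using Finsupp.induction_linear with
  | zero => simp
  | add f g hf hg => simp [hf, hg, add_mul]
  | single k bk =>
    induction v using Finsupp.induction_linear with
    | zero => simp
    | add f g hf hg => simp [hf, hg, mul_add]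
    | single k' bk' =>
      rw [tens2_single]
      rcases k with ⟨k1, k2⟩; rcases k' with ⟨k1', k2'⟩
      by_cases h1 : k1 = m <;> by_cases h2 : k2 = p <;> by_cases h3 : k1' = n <;>
        by_cases h4 : k2' = q <;>
        simp [Finsupp.single_apply, Prod.ext_iff, h1, h2, h3, h4]

lemma Delta_single (c : M →+ ℂ) (k : M × ZMod 2) (b : ℂ) :
    Delta c (Finsupp.single k b) = b • deltaB c k := by
  simp [Delta, Finsupp.lift_apply, Finsupp.sum_single_index]

lemma deltaB_even (c : M →+ ℂ) (m : M) :
    deltaB c (m, (0:ZMod 2)) = Finsupp.single ((m, m), ((0:ZMod 2), (0:ZMod 2))) 1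
      + c m • Finsupp.single ((m, m), ((1:ZMod 2), (1:ZMod 2))) 1 := by
  simp [deltaB]

lemma deltaB_odd (c : M →+ ℂ) (m : M) :
    deltaB c (m, (1:ZMod 2)) = Finsupp.single ((m, m), ((1:ZMod 2), (0:ZMod 2))) 1
      + Finsupp.single ((m, m), ((0:ZMod 2), (1:ZMod 2))) 1 := by
  simp [deltaB, z10]

lemma antipode_even (m : M) (b : ℂ) :
    antipode (Finsupp.single (m, (0:ZMod 2)) b) = Finsupp.single (-m, (0:ZMod 2)) b := by
  simp [antipode, Finsupp.lift_apply, Finsupp.sum_single_index, Finsupp.smul_single]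

lemma antipode_odd (m : M) (b : ℂ) :
    antipode (Finsupp.single (m, (1:ZMod 2)) b) = -Finsupp.single (-m, (1:ZMod 2)) b := by
  simp [antipode, Finsupp.lift_apply, Finsupp.sum_single_index, z10, Finsupp.smul_single]

lemma Delta_apply_00 (c : M →+ ℂ) (u : SupA M) (m n : M) :
    Delta c u ((m, n), ((0:ZMod 2), (0:ZMod 2))) = if m = n then u (m, 0) else 0 := by
  induction u using Finsupp.induction_linear with
  | zero => simp
  | add f g hf hg => simp only [map_add, Finsupp.add_apply, hf, hg]; split_ifs <;> simp
  | single k bk =>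
    rcases k with ⟨k1, k2⟩
    rw [Delta_single]
    rcases eq_or_ne m n with rfl | hmn
    · rcases eq_or_ne k1 m with rfl | hk
      · rcases zmod2_cases k2 with rfl | rfl <;>
          simp [deltaB, Finsupp.single_apply, Prod.ext_iff, z01, z10]
      · rcases zmod2_cases k2 with rfl | rfl <;>
          simp [deltaB, Finsupp.single_apply, Prod.ext_iff, z01, z10, hk]
    · have h1 : ¬((k1, k1) = (m, n)) := by rintro ⟨⟩; exact hmn rfl
      rcases zmod2_cases k2 with rfl | rfl <;>
        simp [deltaB, Finsupp.single_apply, Prod.ext_iff, z01, z10, hmn, h1]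

lemma Delta_apply_11 (c : M →+ ℂ) (u : SupA M) (m n : M) :
    Delta c u ((m, n), ((1:ZMod 2), (1:ZMod 2))) = if m = n then c m * u (m, 0) else 0 := by
  induction u using Finsupp.induction_linear with
  | zero => simp
  | add f g hf hg =>
      simp only [map_add, Finsupp.add_apply, hf, hg]; split_ifs <;> simp [mul_add]
  | single k bk =>
    rcases k with ⟨k1, k2⟩
    rw [Delta_single]
    rcases eq_or_ne m n with rfl | hmn
    · rcases eq_or_ne k1 m with rfl | hk
      · rcases zmod2_cases k2 with rfl | rfl <;>
          simp [deltaB, Finsupp.single_apply, Prod.ext_iff, z01, z10] <;> ring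
      · rcases zmod2_cases k2 with rfl | rfl <;>
          simp [deltaB, Finsupp.single_apply, Prod.ext_iff, z01, z10, hk]
    · have h1 : ¬((k1, k1) = (m, n)) := by rintro ⟨⟩; exact hmn rfl
      rcases zmod2_cases k2 with rfl | rfl <;>
        simp [deltaB, Finsupp.single_apply, Prod.ext_iff, z01, z10, hmn, h1]

lemma Delta_apply_10 (c : M →+ ℂ) (u : SupA M) (m n : M) :
    Delta c u ((m, n), ((1:ZMod 2), (0:ZMod 2))) = if m = n then u (m, 1) else 0 := by
  induction u using Finsupp.induction_linear with
  | zero => simp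
  | add f g hf hg => simp only [map_add, Finsupp.add_apply, hf, hg]; split_ifs <;> simp
  | single k bk =>
    rcases k with ⟨k1, k2⟩
    rw [Delta_single]
    rcases eq_or_ne m n with rfl | hmn
    · rcases eq_or_ne k1 m with rfl | hk
      · rcases zmod2_cases k2 with rfl | rfl <;>
          simp [deltaB, Finsupp.single_apply, Prod.ext_iff, z01, z10]
      · rcases zmod2_cases k2 with rfl | rfl <;>
          simp [deltaB, Finsupp.single_apply, Prod.ext_iff, z01, z10, hk]
    · have h1 : ¬((k1, k1) = (m, n)) := by rintro ⟨⟩; exact hmn rfl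
      rcases zmod2_cases k2 with rfl | rfl <;>
        simp [deltaB, Finsupp.single_apply, Prod.ext_iff, z01, z10, hmn, h1]

lemma tensorSq_single (φ : SupA M' →ₗ[ℂ] SupA M)
    (K : (M' × M') × (ZMod 2 × ZMod 2)) (b : ℂ) :
    tensorSq φ (Finsupp.single K b)
      = b • tens2 (φ (Finsupp.single (K.1.1, K.2.1) 1)) (φ (Finsupp.single (K.1.2, K.2.2) 1)) := by
  simp [tensorSq, Finsupp.lift_apply, Finsupp.sum_single_index]

lemma counit_single (k : M × ZMod 2) (b : ℂ) :
    counit (Finsupp.single k b) = if k.2 = 0 then b else 0 := by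
  simp [counit, Finsupp.lift_apply, Finsupp.sum_single_index]

lemma antipode_single (k : M × ZMod 2) (b : ℂ) :
    antipode (Finsupp.single k b)
      = b • (if k.2 = 0 then Finsupp.single (-k.1, (0:ZMod 2)) (1:ℂ)
          else -Finsupp.single (-k.1, (1:ZMod 2)) 1) := by
  simp [antipode, Finsupp.lift_apply, Finsupp.sum_single_index]

lemma single_eq_smul (k : M × ZMod 2) (b : ℂ) :
    Finsupp.single k b = b • Finsupp.single k (1:ℂ) := by
  rw [Finsupp.smul_single', mul_one]

lemma single_odd_eq_mul (m' : M') :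
    (Finsupp.single (m', (1:ZMod 2)) (1:ℂ))
      = mulA (Finsupp.single (m', (0:ZMod 2)) 1)
          (Finsupp.single ((0:M'), (1:ZMod 2)) 1) := by
  rw [mulA_single]
  simp [mulB, z01]

lemma phi_odd (φ : SupA M' →ₗ[ℂ] SupA M)
    (hmul : ∀ x y : SupA M', φ (mulA x y) = mulA (φ x) (φ y))
    (m' : M') (fm' : M) (a : ℂ)
    (h1 : φ (Finsupp.single (m', (0:ZMod 2)) 1) = Finsupp.single (fm', (0:ZMod 2)) 1)
    (h2 : φ (Finsupp.single ((0:M'), (1:ZMod 2)) 1)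
        = a • Finsupp.single ((0:M), (1:ZMod 2)) 1) :
    φ (Finsupp.single (m', (1:ZMod 2)) 1) = a • Finsupp.single (fm', (1:ZMod 2)) 1 := by
  rw [single_odd_eq_mul, hmul, h1, h2, LinearMap.map_smul, mulA_single]
  simp [mulB, z01]

end Helpers

/-- A superalgebra map `φ* : ℂ[M'][ξ'] → ℂ[M][ξ]` (unital, multiplicative,
parity-preserving `ℂ`-linear) is a morphism of the supertorus Hopf superalgebra
structures determined by `c` and `c'` if and only if: (i) there is a lattice map
`φ̄* : M' → M` with `φ*(x^{m'}) = x^{φ̄*(m')}`; (ii) `φ*(ξ') = aξ` for some `a ∈ ℂ`;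
and (iii) `⟨φ̄*(m'), c⟩ = a² ⟨m', c'⟩` for all `m' ∈ M'`. -/
theorem stmt3 {M M' : Type*} [AddCommGroup M] [AddCommGroup M']
    [Module.Free ℤ M] [Module.Finite ℤ M] [Module.Free ℤ M'] [Module.Finite ℤ M']
    (c : M →+ ℂ) (c' : M' →+ ℂ)
    (φ : SupA M' →ₗ[ℂ] SupA M)
    (hunit : φ (Finsupp.single ((0 : M'), (0 : ZMod 2)) 1)
      = Finsupp.single ((0 : M), (0 : ZMod 2)) 1)
    (hmul : ∀ x y : SupA M', φ (mulA x y) = mulA (φ x) (φ y))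
    (hpar : ∀ (k : M' × ZMod 2) (z : M × ZMod 2), z.2 ≠ k.2 → φ (Finsupp.single k 1) z = 0) :
    ((Delta c).comp φ = (tensorSq φ).comp (Delta c') ∧
      counit.comp φ = counit ∧
      φ.comp antipode = antipode.comp φ)
    ↔ ∃ (f : M' →+ M) (a : ℂ),
        (∀ m' : M', φ (Finsupp.single (m', (0 : ZMod 2)) 1)
          = Finsupp.single (f m', (0 : ZMod 2)) 1) ∧
        φ (Finsupp.single ((0 : M'), (1 : ZMod 2)) 1)
          = a • Finsupp.single ((0 : M), (1 : ZMod 2)) 1 ∧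
        ∀ m' : M', c (f m') = a ^ 2 * c' m' := by
  constructor
  · rintro ⟨hΔ, hε, -⟩
    have hΔφ : ∀ x : SupA M', Delta c (φ x) = tensorSq φ (Delta c' x) :=
      fun x => DFunLike.congr_fun hΔ x
    have hεφ : ∀ x : SupA M', counit (φ x) = counit x :=
      fun x => DFunLike.congr_fun hε x
    -- Step 1: φ sends x^{m'} to a single monomial
    have hu : ∀ m' : M', ∃ m : M,
        φ (Finsupp.single (m', (0:ZMod 2)) 1) = Finsupp.single (m, (0:ZMod 2)) 1 := by
      intro m'
      set u := φ (Finsupp.single (m', (0:ZMod 2)) 1) with hudef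
      set w := φ (Finsupp.single (m', (1:ZMod 2)) 1) with hwdef
      have hpar0 : ∀ m : M, u (m, 1) = 0 := fun m => hpar (m', 0) (m, 1) z10
      have hparw : ∀ m : M, w (m, 0) = 0 := fun m => hpar (m', 1) (m, 0) z01
      have hcu : counit u = 1 := by
        rw [hudef, hεφ, counit_single]; simp
      have key : ∀ m n : M, (if m = n then u (m, 0) else 0) = u (m, 0) * u (n, 0) := by
        intro m n
        have h2 := DFunLike.congr_fun (hΔφ (Finsupp.single (m', (0:ZMod 2)) 1))
          ((m, n), ((0:ZMod 2), (0:ZMod 2)))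
        rw [← hudef, Delta_apply_00] at h2
        rw [Delta_single, one_smul, deltaB_even] at h2
        simp only [map_add, map_smul, tensorSq_single, one_smul] at h2
        rw [h2]
        simp only [Finsupp.add_apply, Finsupp.smul_apply, tens2_apply, ← hudef, ← hwdef,
          hparw, smul_eq_mul]
        ring
      have hune : u ≠ 0 := by
        intro h; rw [h] at hcu; simp at hcu
      obtain ⟨z, hz⟩ : ∃ z, u z ≠ 0 := by
        by_contra h; push_neg at h; exact hune (Finsupp.ext h)
      obtain ⟨m0, p⟩ := z
      have hp : p = 0 := by
        rcases zmod2_cases p with h | h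
        · exact h
        · exact absurd (h ▸ hpar0 m0) hz
      subst hp
      have h1 : u (m0, 0) = 1 := by
        have hk := key m0 m0
        rw [if_pos rfl] at hk
        have : u (m0, 0) * 1 = u (m0, 0) * u (m0, 0) := by rw [mul_one]; exact hk
        exact (mul_left_cancel₀ hz this).symm
      refine ⟨m0, ?_⟩
      ext ⟨n, q⟩
      rcases zmod2_cases q with rfl | rfl
      · rcases eq_or_ne n m0 with rfl | hn
        · rw [h1]; simp [Finsupp.single_apply]
        · have hk := key m0 n
          rw [if_neg (Ne.symm hn), h1, one_mul] at hk
          rw [← hk]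
          simp [Finsupp.single_apply, Ne.symm hn]
      · rw [hpar0 n]
        simp [Finsupp.single_apply, Prod.ext_iff, z01]
    choose g hg using hu
    -- additivity of g
    have hginj : ∀ (x y : M), Finsupp.single (x, (0:ZMod 2)) (1:ℂ)
        = Finsupp.single (y, (0:ZMod 2)) 1 → x = y := by
      intro x y h
      have := Finsupp.single_left_injective (α := M × ZMod 2) (one_ne_zero (α := ℂ)) h
      exact (Prod.ext_iff.mp this).1
    have hgadd : ∀ x y : M', g (x + y) = g x + g y := by
      intro x y
      have hm : (Finsupp.single (x + y, (0:ZMod 2)) (1:ℂ))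
          = mulA (Finsupp.single (x, (0:ZMod 2)) 1) (Finsupp.single (y, (0:ZMod 2)) 1) := by
        rw [mulA_single]; simp [mulB, z01]
      have : φ (Finsupp.single (x + y, (0:ZMod 2)) 1)
          = Finsupp.single (g x + g y, (0:ZMod 2)) 1 := by
        rw [hm, hmul, hg x, hg y, mulA_single]
        simp [mulB, z01]
      rw [hg (x + y)] at this
      exact hginj _ _ this
    -- the odd image
    set v := φ (Finsupp.single ((0:M'), (1:ZMod 2)) 1) with hvdef
    have hparv : ∀ m : M, v (m, 0) = 0 := fun m => hpar (0, 1) (m, 0) z01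
    have hkeyv : ∀ m : M, m ≠ 0 → v (m, 1) = 0 := by
      intro m hm
      have h2 := DFunLike.congr_fun (hΔφ (Finsupp.single ((0:M'), (1:ZMod 2)) 1))
        ((m, 0), ((1:ZMod 2), (0:ZMod 2)))
      rw [← hvdef, Delta_apply_10, if_neg hm] at h2
      rw [Delta_single, one_smul, deltaB_odd] at h2
      simp only [map_add, tensorSq_single, one_smul] at h2
      rw [Finsupp.add_apply, tens2_apply, tens2_apply, ← hvdef, hunit] at h2
      have e1 : (Finsupp.single ((0:M), (0:ZMod 2)) (1:ℂ)) (0, 0) = 1 := by simp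
      have e2 : (Finsupp.single ((0:M), (0:ZMod 2)) (1:ℂ)) (m, 1) = 0 := by
        simp [Finsupp.single_apply, Prod.ext_iff, z01]
      rw [e1, e2, mul_one, zero_mul, add_zero] at h2
      exact h2.symm
    have hv : v = v (0, 1) • Finsupp.single ((0:M), (1:ZMod 2)) 1 := by
      ext ⟨n, q⟩
      rcases zmod2_cases q with rfl | rfl
      · rw [hparv n]
        simp [Finsupp.single_apply, Prod.ext_iff, z10]
      · rcases eq_or_ne n 0 with rfl | hn
        · simp
        · rw [hkeyv n hn]
          simp [Finsupp.single_apply, Prod.ext_iff, Ne.symm hn]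
    set a := v (0, 1) with hadef
    refine ⟨AddMonoidHom.mk' g hgadd, a, hg, by exact hv, ?_⟩
    intro m'
    simp only [AddMonoidHom.mk'_apply]
    -- compute Δ compatibility at ((g m', g m'), (1,1))
    have hw : φ (Finsupp.single (m', (1:ZMod 2)) 1)
        = a • Finsupp.single (g m', (1:ZMod 2)) 1 :=
      phi_odd φ hmul m' (g m') a (hg m') (by exact hv)
    have h2 := DFunLike.congr_fun (hΔφ (Finsupp.single (m', (0:ZMod 2)) 1))
      ((g m', g m'), ((1:ZMod 2), (1:ZMod 2)))
    rw [Delta_apply_11, if_pos rfl, hg m'] at h2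
    rw [Delta_single, one_smul, deltaB_even] at h2
    simp only [map_add, map_smul, tensorSq_single, one_smul] at h2
    rw [hg m', hw] at h2
    rw [Finsupp.add_apply, Finsupp.smul_apply, tens2_apply, tens2_apply] at h2
    have e1 : (Finsupp.single (g m', (0:ZMod 2)) (1:ℂ)) (g m', 0) = 1 := by simp
    have e2 : (Finsupp.single (g m', (0:ZMod 2)) (1:ℂ)) (g m', 1) = 0 := by
      simp [Finsupp.single_apply, Prod.ext_iff, z01]
    have e3 : (a • Finsupp.single (g m', (1:ZMod 2)) (1:ℂ)) (g m', 1) = a := by simp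
    rw [e1, e2, e3, mul_one] at h2
    rw [h2]
    simp only [smul_eq_mul]
    ring
  · rintro ⟨f, a, h1, h2, h3⟩
    have hodd : ∀ m' : M', φ (Finsupp.single (m', (1:ZMod 2)) 1)
        = a • Finsupp.single (f m', (1:ZMod 2)) 1 :=
      fun m' => phi_odd φ hmul m' (f m') a (h1 m') h2
    refine ⟨?_, ?_, ?_⟩
    · apply Finsupp.lhom_ext
      rintro ⟨m', p⟩ b
      rcases zmod2_cases p with rfl | rfl
      · simp only [LinearMap.comp_apply, single_eq_smul (m', (0:ZMod 2)) b, map_smul,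
          h1 m', hodd m', Delta_single, one_smul, deltaB_even, map_add, map_smul,
          tensorSq_single, LinearMap.smul_apply, tens2_single, h3 m']
        module
      · simp only [LinearMap.comp_apply, single_eq_smul (m', (1:ZMod 2)) b, map_smul,
          h1 m', hodd m', Delta_single, one_smul, deltaB_odd, map_add, map_smul,
          tensorSq_single, LinearMap.smul_apply, tens2_single]
        module
    · apply Finsupp.lhom_ext
      rintro ⟨m', p⟩ b
      rcases zmod2_cases p with rfl | rfl
      · simp only [LinearMap.comp_apply, single_eq_smul (m', (0:ZMod 2)) b, map_smul, h1 m']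
        simp [counit_single]
      · simp only [LinearMap.comp_apply, single_eq_smul (m', (1:ZMod 2)) b, map_smul, hodd m']
        simp [counit_single, z10]
    · apply Finsupp.lhom_ext
      rintro ⟨m', p⟩ b
      rcases zmod2_cases p with rfl | rfl
      · simp only [LinearMap.comp_apply, single_eq_smul (m', (0:ZMod 2)) b, map_smul,
          antipode_even, h1 m', h1 (-m'), map_neg f]
      · simp only [LinearMap.comp_apply, single_eq_smul (m', (1:ZMod 2)) b, map_smul,
          antipode_odd, map_neg, hodd m', hodd (-m'), map_neg f, smul_neg]


end
end

section
/- Let σ be a strongly convex rational polyhedral cone in N_R with S_σ = σ̌ ∩ M its dual semigroup (M = N^*), τ a face of σ cut out by m_{σ,τ} ∈ S_σ (i.e. τ = σ ∩ ker m_{σ,τ}), and c ∈ N_C. Then the localization of the ideal J_c^σ = (x^m ∈ C[S_σ] : ⟨m,c⟩ ≠ 0) at the monomial x^{m_{σ,τ}} equals J_c^τ = (x^m ∈ C[S_τ] : ⟨m,c⟩ ≠ 0), as ideals of C[S_τ] = C[S_σ]_{x^{m_{σ,τ}}}. -/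
noncomputable section

/-- The dual semigroup `S_σ = σ̌ ∩ M` of a cone `σ ⊆ ℝⁿ`, inside the lattice `M = ℤⁿ`. -/
def dualSemi {n : ℕ} (σ : Set (Fin n → ℝ)) : AddSubmonoid (Fin n → ℤ) where
  carrier := {m | ∀ u ∈ σ, 0 ≤ ∑ i, (m i : ℝ) * u i}
  zero_mem' := by intro u _; simp
  add_mem' := by
    intro a b ha hb u hu
    have h := add_nonneg (ha u hu) (hb u hu)
    rw [← Finset.sum_add_distrib] at h
    have e : ∑ i, (((a + b) i : ℤ) : ℝ) * u i
        = ∑ i, ((a i : ℝ) * u i + (b i : ℝ) * u i) := by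
      refine Finset.sum_congr rfl fun i _ => ?_
      simp [Pi.add_apply]
      ring
    rw [e]
    exact h

/-- `σ` is a rational polyhedral cone: generated by finitely many lattice points. -/
def IsRatPolyCone {n : ℕ} (σ : Set (Fin n → ℝ)) : Prop :=
  ∃ (k : ℕ) (v : Fin k → (Fin n → ℤ)),
    σ = {u | ∃ lam : Fin k → ℝ, (∀ i, 0 ≤ lam i) ∧
      u = ∑ i, fun j => lam i * (v i j : ℝ)}

/-- `σ` is strongly convex: it contains no line through the origin. -/
def StronglyConvex {n : ℕ} (σ : Set (Fin n → ℝ)) : Prop :=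
  ∀ u ∈ σ, -u ∈ σ → u = 0

/-- The face of `σ` cut out by `m₀ ∈ S_σ`. -/
def faceCut {n : ℕ} (σ : Set (Fin n → ℝ)) (m0 : Fin n → ℤ) : Set (Fin n → ℝ) :=
  {u ∈ σ | ∑ i, (m0 i : ℝ) * u i = 0}

/-- `τ` is a face of `σ`. -/
def IsFaceOf {n : ℕ} (τ σ : Set (Fin n → ℝ)) : Prop :=
  ∃ m0 ∈ dualSemi σ, τ = faceCut σ m0

/-- The pairing of `m ∈ M = ℤⁿ` with `c ∈ N_ℂ = ℂⁿ`. -/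
def pairC {n : ℕ} (m : Fin n → ℤ) (c : Fin n → ℂ) : ℂ := ∑ i, (m i : ℂ) * c i

lemma key {n : ℕ} {σ : Set (Fin n → ℝ)} (hpoly : IsRatPolyCone σ)
    {m0 : Fin n → ℤ} (hm0 : m0 ∈ dualSemi σ) {m : Fin n → ℤ}
    (hm : m ∈ dualSemi (faceCut σ m0)) :
    ∃ K : ℕ, (fun i => m i + (K : ℤ) * m0 i) ∈ dualSemi σ := by
  obtain ⟨t, v, hv⟩ := hpoly
  have hgen : ∀ i, (fun j => (v i j : ℝ)) ∈ σ := by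
    intro i
    rw [hv]
    refine ⟨fun i' => if i' = i then 1 else 0, fun i' => by positivity, ?_⟩
    funext j
    rw [Finset.sum_apply]
    simp [ite_mul]
  set a : Fin t → ℤ := fun i => ∑ j, m j * v i j with ha
  set b : Fin t → ℤ := fun i => ∑ j, m0 j * v i j with hb
  have hcastb : ∀ i, ((b i : ℤ) : ℝ) = ∑ j, (m0 j : ℝ) * (v i j : ℝ) := by
    intro i; push_cast [hb]; ring_nf
  have hcasta : ∀ i, ((a i : ℤ) : ℝ) = ∑ j, (m j : ℝ) * (v i j : ℝ) := by
    intro i; push_cast [ha]; ring_nf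
  have hbnn : ∀ i, 0 ≤ b i := by
    intro i
    have := hm0 _ (hgen i)
    have : (0:ℝ) ≤ (b i : ℝ) := by rw [hcastb]; exact this
    exact_mod_cast this
  set K : ℕ := Finset.univ.sup (fun i => (a i).natAbs) with hK
  have hkey : ∀ i, 0 ≤ a i + (K : ℤ) * b i := by
    intro i
    rcases eq_or_lt_of_le (hbnn i) with h0 | h1
    · -- b i = 0, so v i ∈ faceCut, so a i ≥ 0
      have hface : (fun j => (v i j : ℝ)) ∈ faceCut σ m0 := by
        refine ⟨hgen i, ?_⟩
        rw [← hcastb, ← h0]; simp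
      have := hm _ hface
      have h2 : (0:ℝ) ≤ (a i : ℝ) := by rw [hcasta]; exact this
      have h3 : 0 ≤ a i := by exact_mod_cast h2
      nlinarith [hbnn i]
    · have h2 : (1:ℤ) ≤ b i := h1
      have h3 : (a i).natAbs ≤ K := Finset.le_sup (f := fun i => (a i).natAbs) (Finset.mem_univ i)
      have h4 : -a i ≤ (K : ℤ) := le_trans (neg_le_abs _) (by
        rw [Int.abs_eq_natAbs]; exact_mod_cast h3)
      nlinarith
  refine ⟨K, ?_⟩
  intro u hu
  rw [hv] at hu
  obtain ⟨lam, hlam, rfl⟩ := hu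
  have hcalc : ∑ j, ((m j + (K:ℤ) * m0 j : ℤ) : ℝ) * (∑ i, fun j => lam i * (v i j : ℝ)) j
      = ∑ i, lam i * ((a i : ℝ) + (K:ℝ) * (b i : ℝ)) := by
    simp only [Finset.sum_apply, Finset.mul_sum]
    rw [Finset.sum_comm]
    refine Finset.sum_congr rfl fun i _ => ?_
    rw [hcasta, hcastb, mul_add, Finset.mul_sum, Finset.mul_sum, Finset.mul_sum,
      ← Finset.sum_add_distrib]
    refine Finset.sum_congr rfl fun j _ => ?_
    push_cast
    ring
  rw [hcalc]
  refine Finset.sum_nonneg fun i _ => mul_nonneg (hlam i) ?_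
  have := hkey i
  have : (0:ℝ) ≤ ((a i + (K:ℤ) * b i : ℤ) : ℝ) := by exact_mod_cast this
  push_cast at this
  linarith

/-- Localizing the ideal `J_c^σ` of `ℂ[S_σ]` at the monomial `x^{m₀}` cutting out the
face `τ` of `σ` gives the ideal `J_c^τ` of `ℂ[S_τ]`: as ideals of
`ℂ[S_τ] = ℂ[S_σ]_{x^{m₀}}`, the ideal generated by the monomials of `S_σ` pairing
nontrivially with `c` equals the one generated by the monomials of `S_τ` pairing
nontrivially with `c`. -/
theorem stmt7 (n : ℕ) (σ : Set (Fin n → ℝ))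
    (hpoly : IsRatPolyCone σ) (hsc : StronglyConvex σ)
    (c : Fin n → ℂ) (m0 : Fin n → ℤ) (hm0 : m0 ∈ dualSemi σ) :
    Ideal.span {f : AddMonoidAlgebra ℂ (dualSemi (faceCut σ m0)) |
        ∃ m : dualSemi (faceCut σ m0), (↑m : Fin n → ℤ) ∈ dualSemi σ ∧
          pairC (↑m) c ≠ 0 ∧ f = AddMonoidAlgebra.single m 1}
      = Ideal.span {f : AddMonoidAlgebra ℂ (dualSemi (faceCut σ m0)) |
        ∃ m : dualSemi (faceCut σ m0),
          pairC (↑m) c ≠ 0 ∧ f = AddMonoidAlgebra.single m 1} := by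
  have hsub : dualSemi σ ≤ dualSemi (faceCut σ m0) := fun m hm u hu => hm u hu.1
  apply le_antisymm
  · exact Ideal.span_mono fun f ⟨m, _, h1, h2⟩ => ⟨m, h1, h2⟩
  · rw [Ideal.span_le]
    rintro f ⟨m, hp, rfl⟩
    obtain ⟨K0, hK0⟩ := key hpoly hm0 m.2
    have hpair : ∀ k : ℕ, pairC (fun i => (↑m : Fin n → ℤ) i + (k:ℤ) * m0 i) c
        = pairC ↑m c + (k:ℂ) * pairC m0 c := by
      intro k
      simp [pairC, add_mul, Finset.sum_add_distrib, Finset.mul_sum, mul_assoc]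
    have hmem' : (fun i => (↑m : Fin n → ℤ) i + ((K0+1:ℕ):ℤ) * m0 i) ∈ dualSemi σ := by
      have he : (fun i => (↑m : Fin n → ℤ) i + ((K0+1:ℕ):ℤ) * m0 i)
          = (fun i => (↑m : Fin n → ℤ) i + (K0:ℤ) * m0 i) + m0 := by
        funext i; push_cast; show (↑m : Fin n → ℤ) i + ((K0:ℤ) + 1) * m0 i = (↑m : Fin n → ℤ) i + (K0:ℤ) * m0 i + m0 i; ring
      rw [he]
      exact add_mem hK0 hm0
    obtain ⟨k, hkmem, hkpair⟩ : ∃ k : ℕ,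
        ((fun i => (↑m : Fin n → ℤ) i + (k:ℤ) * m0 i) ∈ dualSemi σ) ∧
          pairC (fun i => (↑m : Fin n → ℤ) i + (k:ℤ) * m0 i) c ≠ 0 := by
      by_cases h : pairC ↑m c + (K0:ℂ) * pairC m0 c = 0
      · refine ⟨K0+1, hmem', ?_⟩
        rw [hpair]
        intro h2
        have hq : pairC m0 c = 0 := by push_cast at h2; linear_combination h2 - h
        exact hp (by linear_combination h - (K0:ℂ) * hq)
      · exact ⟨K0, hK0, by rw [hpair]; exact h⟩
    have hemem : (fun i => -((k:ℤ) * m0 i)) ∈ dualSemi (faceCut σ m0) := by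
      intro u hu
      have hc : ∑ i, ((-((k:ℤ) * m0 i) : ℤ) : ℝ) * u i
          = -(k:ℝ) * ∑ i, (m0 i : ℝ) * u i := by
        rw [Finset.mul_sum]
        refine Finset.sum_congr rfl fun i _ => ?_
        push_cast
        ring
      rw [hc, hu.2, mul_zero]
    set mσ : dualSemi (faceCut σ m0) :=
      ⟨fun i => (↑m : Fin n → ℤ) i + (k:ℤ) * m0 i, hsub hkmem⟩ with hmσ
    set e : dualSemi (faceCut σ m0) := ⟨fun i => -((k:ℤ) * m0 i), hemem⟩ with hedef
    have hme : m = e + mσ := by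
      apply Subtype.ext
      funext i
      show (↑m : Fin n → ℤ) i = ((↑e : Fin n → ℤ) + (↑mσ : Fin n → ℤ)) i
      simp [hmσ, hedef]
    have hsingle : (AddMonoidAlgebra.single m (1:ℂ))
        = AddMonoidAlgebra.single e 1 * AddMonoidAlgebra.single mσ 1 := by
      rw [AddMonoidAlgebra.single_mul_single, one_mul, ← hme]
    rw [SetLike.mem_coe, hsingle]
    exact Ideal.mul_mem_left _ _ (Ideal.subset_span ⟨mσ, hkmem, hkpair, rfl⟩)
end
end

section
/- Let σ be a strongly convex rational polyhedral cone in N_R, τ = σ ∩ ker m_{σ,τ} a face, and J^σ ⊆ C[S_σ] a monomial ideal generated by a finite set B_σ ⊂ S_σ; similarly J^τ generated by B_τ ⊂ S_τ. Then J^σ localized at x^{m_{σ,τ}} equals J^τ if and only if: (i) for every b ∈ B_σ there exists a ∈ B_τ with a ≤_τ b, and (ii) for every a ∈ B_τ there exists b ∈ B_σ with b ≤_τ a; where m' ≤_τ m means m - m' ∈ S_τ. -/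
noncomputable section

lemma span_coeff_aux {M : Type*} [AddCommMonoid M] (P : M → Prop)
    (f : AddMonoidAlgebra ℂ M)
    (hf : f ∈ Ideal.span {g : AddMonoidAlgebra ℂ M | ∃ a, P a ∧ g = AddMonoidAlgebra.single a 1}) :
    ∀ x, f.coeff x ≠ 0 → ∃ a, P a ∧ ∃ s, x = s + a := by
  classical
  induction hf using Submodule.span_induction with
  | mem g hg =>
    obtain ⟨a, ha, rfl⟩ := hg
    intro x hx
    have hxa : x = a := by
      by_contra hne
      exact hx (Finsupp.single_eq_of_ne' (Ne.symm hne))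
    exact ⟨a, ha, 0, by rw [zero_add]; exact hxa⟩
  | zero => intro x hx; exact (hx rfl).elim
  | add f g _ _ ihf ihg =>
    intro x hx
    have : f.coeff x ≠ 0 ∨ g.coeff x ≠ 0 := by
      by_contra h
      push_neg at h
      exact hx (show f.coeff x + g.coeff x = 0 by rw [h.1, h.2, add_zero])
    rcases this with h | h
    · exact ihf x h
    · exact ihg x h
  | smul r f _ ih =>
    intro x hx
    have hmul : (r * f).coeff x ≠ 0 := hx
    rw [AddMonoidAlgebra.mul_apply] at hmul
    obtain ⟨a1, _, h1⟩ := Finset.exists_ne_zero_of_sum_ne_zero hmul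
    dsimp only at h1
    obtain ⟨a2, _, h2⟩ := Finset.exists_ne_zero_of_sum_ne_zero h1
    dsimp only at h2
    by_cases hax : a1 + a2 = x
    · have hfa2 : f.coeff a2 ≠ 0 := by
        intro h0
        rw [if_pos hax, h0, mul_zero] at h2
        exact h2 rfl
      obtain ⟨a, ha, s, hs⟩ := ih a2 hfa2
      exact ⟨a, ha, a1 + s, by rw [← hax, hs, add_assoc]⟩
    · rw [if_neg hax] at h2; exact absurd rfl h2

lemma single_mem_span_iff {M : Type*} [AddCommMonoid M] (P : M → Prop) (m : M) :
    (AddMonoidAlgebra.single m 1 : AddMonoidAlgebra ℂ M) ∈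
      Ideal.span {g : AddMonoidAlgebra ℂ M | ∃ a, P a ∧ g = AddMonoidAlgebra.single a 1} ↔
    ∃ a, P a ∧ ∃ s, m = s + a := by
  constructor
  · intro h
    exact span_coeff_aux P _ h m (by simp)
  · rintro ⟨a, ha, s, rfl⟩
    have hmem : (AddMonoidAlgebra.single a 1 : AddMonoidAlgebra ℂ M) ∈
        Ideal.span {g : AddMonoidAlgebra ℂ M | ∃ a, P a ∧ g = AddMonoidAlgebra.single a 1} :=
      Ideal.subset_span ⟨a, ha, rfl⟩
    have := Ideal.mul_mem_left _ (AddMonoidAlgebra.single s 1) hmem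
    rwa [AddMonoidAlgebra.single_mul_single, one_mul] at this

set_option maxHeartbeats 1000000 in
/-- With `τ = σ ∩ ker m₀` a face of `σ`, `J^σ` generated by a finite `B_σ ⊂ S_σ` and
`J^τ` generated by a finite `B_τ ⊂ S_τ`, the localization of `J^σ` at `x^{m₀}`
(i.e. its extension to `ℂ[S_τ]`) equals `J^τ` iff every `b ∈ B_σ` is divisible
in `S_τ` by some `a ∈ B_τ` and every `a ∈ B_τ` is divisible in `S_τ` by some
`b ∈ B_σ`. -/
theorem stmt8 (n : ℕ) (σ : Set (Fin n → ℝ))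
    (hpoly : IsRatPolyCone σ) (hsc : StronglyConvex σ)
    (m0 : Fin n → ℤ) (hm0 : m0 ∈ dualSemi σ)
    (Bσ Bτ : Finset (Fin n → ℤ))
    (hBσ : ∀ b ∈ Bσ, b ∈ dualSemi σ)
    (hBτ : ∀ a ∈ Bτ, a ∈ dualSemi (faceCut σ m0)) :
    (Ideal.span {f : AddMonoidAlgebra ℂ (dualSemi (faceCut σ m0)) |
        ∃ m : dualSemi (faceCut σ m0), (↑m : Fin n → ℤ) ∈ Bσ ∧
          f = AddMonoidAlgebra.single m 1}
      = Ideal.span {f : AddMonoidAlgebra ℂ (dualSemi (faceCut σ m0)) |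
        ∃ m : dualSemi (faceCut σ m0), (↑m : Fin n → ℤ) ∈ Bτ ∧
          f = AddMonoidAlgebra.single m 1})
    ↔ ((∀ b ∈ Bσ, ∃ a ∈ Bτ, b - a ∈ dualSemi (faceCut σ m0)) ∧
       (∀ a ∈ Bτ, ∃ b ∈ Bσ, a - b ∈ dualSemi (faceCut σ m0))) := by

  have hsub : ∀ m ∈ dualSemi σ, m ∈ dualSemi (faceCut σ m0) := fun m hm u hu => hm u hu.1
  constructor
  · intro heq
    constructor
    · intro b hb
      have hbS : b ∈ dualSemi (faceCut σ m0) := hsub b (hBσ b hb)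
      have hmem : (AddMonoidAlgebra.single (⟨b, hbS⟩ : dualSemi (faceCut σ m0)) 1 :
          AddMonoidAlgebra ℂ (dualSemi (faceCut σ m0))) ∈
          Ideal.span {f : AddMonoidAlgebra ℂ (dualSemi (faceCut σ m0)) |
            ∃ m : dualSemi (faceCut σ m0), (↑m : Fin n → ℤ) ∈ Bσ ∧
              f = AddMonoidAlgebra.single m 1} :=
        Ideal.subset_span ⟨⟨b, hbS⟩, hb, rfl⟩
      rw [heq] at hmem
      obtain ⟨a, ha, s, hsum⟩ :=
        (single_mem_span_iff (fun m : dualSemi (faceCut σ m0) => (↑m : Fin n → ℤ) ∈ Bτ)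
          ⟨b, hbS⟩).mp hmem
      refine ⟨↑a, ha, ?_⟩
      have hco : b = ↑s + ↑a := congrArg Subtype.val hsum
      rw [hco, add_sub_cancel_right]
      exact s.2
    · intro a ha
      have haS : a ∈ dualSemi (faceCut σ m0) := hBτ a ha
      have hmem : (AddMonoidAlgebra.single (⟨a, haS⟩ : dualSemi (faceCut σ m0)) 1 :
          AddMonoidAlgebra ℂ (dualSemi (faceCut σ m0))) ∈
          Ideal.span {f : AddMonoidAlgebra ℂ (dualSemi (faceCut σ m0)) |
            ∃ m : dualSemi (faceCut σ m0), (↑m : Fin n → ℤ) ∈ Bτ ∧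
              f = AddMonoidAlgebra.single m 1} :=
        Ideal.subset_span ⟨⟨a, haS⟩, ha, rfl⟩
      rw [← heq] at hmem
      obtain ⟨b, hb, s, hsum⟩ :=
        (single_mem_span_iff (fun m : dualSemi (faceCut σ m0) => (↑m : Fin n → ℤ) ∈ Bσ)
          ⟨a, haS⟩).mp hmem
      refine ⟨↑b, hb, ?_⟩
      have hco : a = ↑s + ↑b := congrArg Subtype.val hsum
      rw [hco, add_sub_cancel_right]
      exact s.2
  · rintro ⟨h1, h2⟩
    apply le_antisymm
    · rw [Ideal.span_le]
      rintro f ⟨m, hm, rfl⟩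
      obtain ⟨a, ha, hd⟩ := h1 ↑m hm
      refine SetLike.mem_coe.mpr ?_
      exact (single_mem_span_iff (fun m : dualSemi (faceCut σ m0) => (↑m : Fin n → ℤ) ∈ Bτ)
        m).mpr ⟨⟨a, hBτ a ha⟩, ha, ⟨↑m - a, hd⟩, Subtype.ext (by simp)⟩
    · rw [Ideal.span_le]
      rintro f ⟨m, hm, rfl⟩
      obtain ⟨b, hb, hd⟩ := h2 ↑m hm
      refine SetLike.mem_coe.mpr ?_
      exact (single_mem_span_iff (fun m : dualSemi (faceCut σ m0) => (↑m : Fin n → ℤ) ∈ Bσ)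
        m).mpr ⟨⟨b, hsub b (hBσ b hb)⟩, hb, ⟨↑m - b, hd⟩, Subtype.ext (by simp)⟩
end
end

section
/- Let S be a finitely generated affine semigroup in a lattice M, c ∈ Hom_Z(M, C), and H = span_C{x^m : ⟨m,c⟩ = 0} ⊆ C[S]. Let J ⊆ C[S] be a monomial ideal containing J_c = (x^m : ⟨m,c⟩ ≠ 0). Consider A = C[S] ⊕ ξJ with ξ² = 0, and the odd derivation Q on A determined by Q(x^m) = ⟨m,c⟩ x^m ξ and Q(x^m ξ) = x^m. Then ker(Q)|_{A^{Q²}} / Q(A^{Q²}) ≅ C[S]/J as vector spaces, where A^{Q²} is the kernel of Q² on A. -/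
set_option synthInstance.maxHeartbeats 1000000
set_option maxHeartbeats 1000000

/-- The monomial `x^s` in the semigroup algebra `ℂ[S]`. -/
noncomputable def mono {M : Type*} [AddCommGroup M] (S : AddSubmonoid M) (s : S) :
    AddMonoidAlgebra ℂ S :=
  AddMonoidAlgebra.single s 1

/-- Duflo–Serganova cohomology of a toric supervariety: for `A = ℂ[S] ⊕ ξJ` with the
odd derivation `Q` determined by `Q(x^m) = ⟨m,c⟩ x^m ξ` and `Q(x^m ξ) = x^m`, one has
`ker(Q|_{A^{Q²}}) / Q(A^{Q²}) ≅ ℂ[S]/J` as vector spaces, where `A^{Q²} = ker Q²`.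
The isomorphism of `ker(Q)|_{A^{Q²}} / Q(A^{Q²})` with `ℂ[S]/J` is expressed by a
surjective linear map from `ker Q² ⊓ ker Q` onto `ℂ[S]/J` whose kernel is exactly
`Q(ker Q²)`. -/
theorem stmt10 {M : Type*} [AddCommGroup M] [Module.Free ℤ M] [Module.Finite ℤ M]
    (S : AddSubmonoid M) (hS : S.FG) (c : M →+ ℂ)
    (J : Ideal (AddMonoidAlgebra ℂ S))
    (G : Set S) (hmono : J = Ideal.span (mono S '' G))
    (hJc : Ideal.span (mono S '' {m : S | c ↑m ≠ 0}) ≤ J)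
    (T : AddMonoidAlgebra ℂ S →ₗ[ℂ] AddMonoidAlgebra ℂ S)
    (hT : ∀ m : S, T (mono S m) = c ↑m • mono S m)
    (Q : (AddMonoidAlgebra ℂ S × ↥(Submodule.restrictScalars ℂ J)) →ₗ[ℂ]
      (AddMonoidAlgebra ℂ S × ↥(Submodule.restrictScalars ℂ J)))
    (hQ : ∀ x, (Q x).1 = (↑x.2 : AddMonoidAlgebra ℂ S) ∧
      ((Q x).2 : AddMonoidAlgebra ℂ S) = T x.1) :
    ∃ θ : ↥(LinearMap.ker (Q.comp Q) ⊓ LinearMap.ker Q) →ₗ[ℂ]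
        (AddMonoidAlgebra ℂ S ⧸ Submodule.restrictScalars ℂ J),
      Function.Surjective θ ∧
      LinearMap.ker θ = Submodule.comap (LinearMap.ker (Q.comp Q) ⊓ LinearMap.ker Q).subtype
        (Submodule.map Q (LinearMap.ker (Q.comp Q))) := by
  classical
  -- T vanishes when all support monomials have c = 0
  have hTzero : ∀ a : AddMonoidAlgebra ℂ S, (∀ m ∈ a.coeff.support, c ↑m = 0) → T a = 0 := by
    intro a ha
    have hrep : a = a.coeff.sum fun m b => b • mono S m := by
      apply AddMonoidAlgebra.coeff_injective
      rw [AddMonoidAlgebra.coeff_finsuppSum]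
      conv_lhs => rw [← Finsupp.sum_single a.coeff]
      refine Finsupp.sum_congr fun m hm => ?_
      simp [mono, AddMonoidAlgebra.coeff_smul, AddMonoidAlgebra.coeff_single, Finsupp.smul_single']
    rw [hrep, map_finsuppSum]
    refine Finset.sum_eq_zero fun m hm => ?_
    show T (a.coeff m • mono S m) = 0
    rw [map_smul, hT, ha m hm]
    simp
  -- membership in J when all support monomials have c ≠ 0
  have hJmem : ∀ a : AddMonoidAlgebra ℂ S, (∀ m ∈ a.coeff.support, c ↑m ≠ 0) → a ∈ J := by
    intro a ha
    have hrep : a = a.coeff.sum fun m b => b • mono S m := by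
      apply AddMonoidAlgebra.coeff_injective
      rw [AddMonoidAlgebra.coeff_finsuppSum]
      conv_lhs => rw [← Finsupp.sum_single a.coeff]
      refine Finsupp.sum_congr fun m hm => ?_
      simp [mono, AddMonoidAlgebra.coeff_smul, AddMonoidAlgebra.coeff_single, Finsupp.smul_single']
    rw [hrep]
    refine Ideal.sum_mem _ fun m hm => ?_
    have h1 : mono S m ∈ J := hJc (Ideal.subset_span ⟨m, ha m hm, rfl⟩)
    exact (Submodule.restrictScalars ℂ J).smul_mem _ h1
  -- decomposition
  have hdec : ∀ b : AddMonoidAlgebra ℂ S, ∃ a : AddMonoidAlgebra ℂ S,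
      T a = 0 ∧ b - a ∈ J := by
    intro b
    obtain ⟨a, ha⟩ : ∃ a : AddMonoidAlgebra ℂ S,
        ∀ m : S, a.coeff m = if c ↑m = 0 then b.coeff m else 0 :=
      ⟨AddMonoidAlgebra.ofCoeff (Finsupp.filter (fun m : S => c ↑m = 0) b.coeff),
        fun m => Finsupp.filter_apply (fun m : S => c ↑m = 0) b.coeff m⟩
    refine ⟨a, hTzero _ fun m hm => ?_, hJmem _ fun m hm => ?_⟩
    · by_contra hc
      exact Finsupp.mem_support_iff.mp hm (by rw [ha m, if_neg hc])
    · intro hc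
      apply Finsupp.mem_support_iff.mp hm
      rw [AddMonoidAlgebra.coeff_sub, Finsupp.sub_apply, ha m, if_pos hc, sub_self]
  -- characterization of kernels
  have hkerQ : ∀ x, x ∈ LinearMap.ker Q ↔ (x.2 : AddMonoidAlgebra ℂ S) = 0 ∧ T x.1 = 0 := by
    intro x
    rw [LinearMap.mem_ker]
    constructor
    · intro h
      obtain ⟨h1, h2⟩ := hQ x
      rw [h] at h1 h2
      exact ⟨h1.symm, h2.symm⟩
    · intro ⟨h1, h2⟩
      have e1 : (Q x).1 = 0 := (hQ x).1.trans h1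
      have e2 : ((Q x).2 : AddMonoidAlgebra ℂ S) = 0 := (hQ x).2.trans h2
      exact Prod.ext e1 (Subtype.ext e2)
  have hkerQ2 : ∀ x, x ∈ LinearMap.ker (Q.comp Q) ↔ T x.1 = 0 ∧ T (x.2 : AddMonoidAlgebra ℂ S) = 0 := by
    intro x
    rw [LinearMap.mem_ker, LinearMap.comp_apply]
    rw [show Q (Q x) = 0 ↔ Q x ∈ LinearMap.ker Q from Iff.rfl, hkerQ]
    rw [(hQ x).2, (hQ x).1]
  -- the map θ
  set K := LinearMap.ker (Q.comp Q) ⊓ LinearMap.ker Q with hK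
  refine ⟨(Submodule.restrictScalars ℂ J).mkQ ∘ₗ (LinearMap.fst ℂ _ _) ∘ₗ K.subtype, ?_, ?_⟩
  · intro b
    obtain ⟨b₀, rfl⟩ := (Submodule.restrictScalars ℂ J).mkQ_surjective b
    obtain ⟨a, hTa, hsub⟩ := hdec b₀
    have hmem : ((a, 0) : AddMonoidAlgebra ℂ S × ↥(Submodule.restrictScalars ℂ J)) ∈ K := by
      rw [hK, Submodule.mem_inf, hkerQ2, hkerQ]
      refine ⟨⟨hTa, ?_⟩, ?_, hTa⟩
      · simp
      · simp
    refine ⟨⟨(a, 0), hmem⟩, ?_⟩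
    simp only [LinearMap.comp_apply, Submodule.subtype_apply, LinearMap.fst_apply,
      Submodule.mkQ_apply]
    rw [Submodule.Quotient.eq]
    have : a - b₀ ∈ J := by simpa [neg_sub] using neg_mem hsub
    simpa using this
  · ext x
    simp only [LinearMap.mem_ker, LinearMap.comp_apply, Submodule.subtype_apply,
      LinearMap.fst_apply, Submodule.mkQ_apply, Submodule.mem_comap, Submodule.mem_map,
      Submodule.Quotient.mk_eq_zero, Submodule.restrictScalars_mem]
    obtain ⟨⟨a, j⟩, hxmem⟩ := x
    have hxK := Submodule.mem_inf.mp hxmem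
    have hx2 : (j : AddMonoidAlgebra ℂ S) = 0 := ((hkerQ _).1 hxK.2).1
    have hTx1 : T a = 0 := ((hkerQ _).1 hxK.2).2
    simp only
    constructor
    · intro hxJ
      refine ⟨(0, ⟨a, hxJ⟩), ?_, ?_⟩
      · have : ((0 : AddMonoidAlgebra ℂ S), (⟨a, hxJ⟩ : ↥(Submodule.restrictScalars ℂ J)))
            ∈ LinearMap.ker (Q.comp Q) := (hkerQ2 _).2 (by simpa using hTx1)
        simpa using this
      · obtain ⟨h1, h2⟩ := hQ ((0 : AddMonoidAlgebra ℂ S), ⟨a, hxJ⟩)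
        refine Prod.ext ?_ ?_
        · simpa using h1
        · refine Subtype.ext ?_
          rw [h2]
          simp [hx2]
    · rintro ⟨y, hy, hQy⟩
      have : (a, j).1 = (y.2 : AddMonoidAlgebra ℂ S) := by
        have := (hQ y).1
        rw [hQy] at this
        exact this
      show (a, j).1 ∈ J
      rw [this]
      exact y.2.2
end
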